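/- For all real x, exp(−2π|x|) = (1/π) ∫_{−∞}^{∞} e(xv)/(1 + v²) dv. -/

import Mathlib

noncomputable def e (z : ℝ) : ℂ := Complex.exp (2 * Real.pi * Complex.I * z)

open MeasureTheory Real Complex Filter Set Topology FourierTransform

lemma hasDerivAt_aux {c : ℂ} (hc : c ≠ 0) (x : ℝ) :
    HasDerivAt (fun v : ℝ => c⁻¹ * Complex.exp (c * v)) (Complex.exp (c * x)) x := by
  have h1 : HasDerivAt (fun z : ℂ => c⁻¹ * Complex.exp (c * z)) (Complex.exp (c * x)) (x : ℂ) := by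
    have h0 : HasDerivAt (fun z : ℂ => c * z) c (x : ℂ) := by
      simpa using (hasDerivAt_id (x : ℂ)).const_mul c
    have h2 := ((Complex.hasDerivAt_exp (c * x)).comp (x : ℂ) h0).const_mul c⁻¹
    rw [show c⁻¹ * (Complex.exp (c * x) * c) = Complex.exp (c * x) by
      rw [mul_comm (Complex.exp _) c, inv_mul_cancel_left₀ hc]] at h2
    exact h2
  exact h1.comp_ofReal

lemma integrableOn_cexp_Ioi {c : ℂ} (hc : c.re < 0) :
    IntegrableOn (fun v : ℝ => Complex.exp (c * v)) (Ioi 0) := by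
  have hb : (0:ℝ) < -c.re := by linarith
  refine (exp_neg_integrableOn_Ioi 0 hb).mono' ?_ ?_
  · exact (Complex.continuous_exp.comp (by continuity)).aestronglyMeasurable
  · filter_upwards with v
    rw [Complex.norm_exp]
    simp [neg_mul, mul_comm]

lemma integral_cexp_Ioi {c : ℂ} (hc : c.re < 0) :
    (∫ v in Ioi (0:ℝ), Complex.exp (c * v)) = -c⁻¹ := by
  have hc0 : c ≠ 0 := fun h => by simp [h] at hc
  have htend : Tendsto (fun v : ℝ => c⁻¹ * Complex.exp (c * v)) atTop (𝓝 0) := by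
    rw [tendsto_zero_iff_norm_tendsto_zero]
    have h1 : Tendsto (fun v : ℝ => c.re * v) atTop atBot := by
      exact tendsto_id.const_mul_atTop_of_neg hc
    have h2 : Tendsto (fun v : ℝ => Real.exp (c.re * v)) atTop (𝓝 0) :=
      Real.tendsto_exp_atBot.comp h1
    have := h2.const_mul ‖c⁻¹‖
    simpa [Complex.norm_exp, mul_comm] using this
  have := integral_Ioi_of_hasDerivAt_of_tendsto'
    (fun x _ => hasDerivAt_aux hc0 x) (integrableOn_cexp_Ioi hc) htend
  simpa using this

lemma g_cont : Continuous (fun v : ℝ => (Real.exp (-(2 * π * |v|)) : ℂ)) := by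
  exact Complex.continuous_ofReal.comp (Real.continuous_exp.comp (by continuity))

lemma g_integrable_real : Integrable (fun v : ℝ => Real.exp (-(2 * π * |v|))) := by
  have hpos : (0:ℝ) < 2 * π := by positivity
  have h1 : IntegrableOn (fun v : ℝ => Real.exp (-(2 * π * |v|))) (Ioi 0) := by
    refine (exp_neg_integrableOn_Ioi 0 hpos).congr_fun ?_ measurableSet_Ioi
    intro v hv
    simp only [abs_of_pos (mem_Ioi.mp hv)]
    ring_nf
  have h2 : IntegrableOn (fun v : ℝ => Real.exp (-(2 * π * |v|))) (Iio 0) := by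
    rw [← (Measure.measurePreserving_neg (volume : Measure ℝ)).integrableOn_comp_preimage
        (Homeomorph.neg ℝ).measurableEmbedding]
    simp only [Function.comp_def, abs_neg, neg_preimage, neg_Iio, neg_zero]
    exact h1
  rw [← integrableOn_univ, ← @Iio_union_Ici _ _ (0 : ℝ), integrableOn_union,
    integrableOn_Ici_iff_integrableOn_Ioi]
  exact ⟨h2, h1⟩

lemma g_integrable : Integrable (fun v : ℝ => (Real.exp (-(2 * π * |v|)) : ℂ)) :=
  g_integrable_real.ofReal

lemma fourier_g (w : ℝ) :
    𝓕 (fun v : ℝ => (Real.exp (-(2 * π * |v|)) : ℂ)) w = (1 / π) / (1 + (w:ℂ)^2) := by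
  rw [Real.fourier_real_eq_integral_exp_smul]
  have hint : ∀ v : ℝ, Complex.exp (↑(-2 * π * v * w) * Complex.I) •
      (Real.exp (-(2 * π * |v|)) : ℂ)
      = Complex.exp ((↑(-2 * π * v * w) * Complex.I) + ↑(-(2 * π * |v|))) := by
    intro v
    rw [Complex.exp_add, smul_eq_mul, Complex.ofReal_exp]
  simp only [hint]
  set c₁ : ℂ := -(2 * π) * (1 + w * Complex.I) with hc₁
  set c₂ : ℂ := (2 * π) * (1 - w * Complex.I) with hc₂
  have hre1 : c₁.re < 0 := by
    simp [hc₁]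
    positivity
  have hre2 : (-c₂).re < 0 := by
    simp [hc₂]
    positivity
  have key : (∫ v : ℝ, Complex.exp ((↑(-2 * π * v * w) * Complex.I) + ↑(-(2 * π * |v|))))
      = (∫ v in Iic (0:ℝ), Complex.exp (c₂ * v)) + ∫ v in Ioi (0:ℝ), Complex.exp (c₁ * v) := by
    set F : ℝ → ℂ := fun v => Complex.exp ((↑(-2 * π * v * w) * Complex.I) + ↑(-(2 * π * |v|)))
      with hF
    have hFc : Continuous F := by
      apply Complex.continuous_exp.comp
      apply Continuous.add
      · exact (Complex.continuous_ofReal.comp (by continuity)).mul continuous_const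
      · exact Complex.continuous_ofReal.comp (by continuity)
    have hFi : Integrable F := by
      refine g_integrable_real.mono' hFc.aestronglyMeasurable ?_
      filter_upwards with v
      rw [Complex.norm_exp]
      simp
    rw [← intervalIntegral.integral_Iic_add_Ioi hFi.integrableOn hFi.integrableOn]
    congr 1
    · apply setIntegral_congr_fun measurableSet_Iic
      intro v hv
      simp only [hF, abs_of_nonpos (mem_Iic.mp hv), hc₂]
      congr 1
      push_cast
      ring
    · apply setIntegral_congr_fun measurableSet_Ioi
      intro v hv
      simp only [hF, abs_of_pos (mem_Ioi.mp hv), hc₁]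
      congr 1
      push_cast
      ring
  rw [key]
  have e1 : (∫ v in Iic (0:ℝ), Complex.exp (c₂ * v)) = c₂⁻¹ := by
    have h := integral_cexp_Ioi hre2
    have h3 := integral_comp_neg_Iic (0:ℝ) (fun v : ℝ => Complex.exp (-c₂ * v))
    have h2 : (∫ v in Iic (0:ℝ), Complex.exp (c₂ * v))
        = ∫ x in Iic (0:ℝ), (fun v : ℝ => Complex.exp (-c₂ * v)) (-x) := by
      apply setIntegral_congr_fun measurableSet_Iic
      intro v _
      simp only
      congr 1
      push_cast
      ring
    rw [h2, h3, neg_zero, h, inv_neg, neg_neg]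
  have e2 : (∫ v in Ioi (0:ℝ), Complex.exp (c₁ * v)) = -c₁⁻¹ := integral_cexp_Ioi hre1
  rw [e1, e2]
  have h1 : (1 : ℂ) + w * Complex.I ≠ 0 := by
    intro h
    have := congrArg Complex.re h
    simp at this
  have h2 : (1 : ℂ) - w * Complex.I ≠ 0 := by
    intro h
    have := congrArg Complex.re h
    simp at this
  have hpi : (π : ℂ) ≠ 0 := Complex.ofReal_ne_zero.mpr Real.pi_ne_zero
  have hsq : (1 : ℂ) + (w:ℂ)^2 ≠ 0 := by
    have h0 : ((1 + w^2 : ℝ):ℂ) ≠ 0 :=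
      Complex.ofReal_ne_zero.mpr (by positivity)
    simpa using h0
  rw [hc₁, hc₂]
  field_simp
  ring_nf
  rw [Complex.I_sq]
  ring

lemma Fg_integrable : Integrable (𝓕 (fun v : ℝ => (Real.exp (-(2 * π * |v|)) : ℂ))) := by
  have h : Integrable (fun w : ℝ => ((1 + w^2)⁻¹ : ℝ) : ℝ → ℝ) := integrable_inv_one_add_sq
  have hC : Integrable (fun w : ℝ => (((1 + w^2)⁻¹ : ℝ) : ℂ)) := h.ofReal
  have h2 := hC.const_mul (1/π : ℂ)
  apply h2.congr
  filter_upwards with w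
  rw [fourier_g w, div_eq_mul_inv]
  push_cast
  ring

/-- For all real `x`, `exp(-2π|x|) = (1/π) ∫ e(xv)/(1+v²) dv`. -/
theorem exp_eq_integral_cauchy_kernel (x : ℝ) :
    (Real.exp (-(2 * Real.pi * |x|)) : ℂ)
      = (1 / (Real.pi : ℂ)) * ∫ v : ℝ, e (x * v) / (1 + (v : ℂ) ^ 2) := by
  have hinv := g_cont.fourierInv_fourier_eq g_integrable Fg_integrable
  have hx : 𝓕⁻ (𝓕 (fun v : ℝ => (Real.exp (-(2 * π * |v|)) : ℂ))) x
      = (Real.exp (-(2 * π * |x|)) : ℂ) := congrFun hinv x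
  rw [Real.fourierInv_eq_fourier_neg,
    Real.fourier_real_eq_integral_exp_smul] at hx
  rw [← hx]
  have heq : ∀ v : ℝ, Complex.exp (↑(-2 * π * v * -x) * Complex.I) •
      𝓕 (fun v : ℝ => (Real.exp (-(2 * π * |v|)) : ℂ)) v
      = (1/(π:ℂ)) * (e (x*v) / (1 + (v:ℂ)^2)) := by
    intro v
    rw [fourier_g v, smul_eq_mul, e]
    have h3 : ((-2 * π * v * -x : ℝ) : ℂ) * Complex.I
        = 2 * (π:ℂ) * Complex.I * ((x:ℂ)*(v:ℂ)) := by push_cast; ring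
    rw [h3]
    push_cast
    ring
  simp only [heq]
  rw [MeasureTheory.integral_const_mul]
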